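/- A quasi-metric space (X,d) has the property that every bounded ideal of (X,d) has a colimit if and only if every bounded forward Cauchy net in (X,d) has a Yoneda limit. -/

import Mathlib

open scoped ENNReal NNReal

universe u v w

/-- A quasi-metric space structure on `X`: distances valued in `[0,∞]`, with
`d x x = 0`, the triangle inequality, and separatedness. -/
structure QuasiMetric (X : Type u) where
  d : X → X → ℝ≥0∞
  d_self : ∀ x, d x x = 0
  d_triangle : ∀ x y z, d x z ≤ d x y + d y z
  d_separated : ∀ x y, d x y = 0 → d y x = 0 → x = y

namespace QuasiMetric

variable {X : Type u}

/-- The order on formal balls: `(x, r) ⊑ (y, s)` iff `s + d x y ≤ r`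
(equivalently `d x y ≤ r - s`). -/
def ballLE (q : QuasiMetric X) (p p' : X × ℝ≥0) : Prop :=
  (p'.2 : ℝ≥0∞) + q.d p.1 p'.1 ≤ (p.2 : ℝ≥0∞)

/-- `b` is a least upper bound of the set `S` of formal balls. -/
def IsBallLUB (q : QuasiMetric X) (S : Set (X × ℝ≥0)) (b : X × ℝ≥0) : Prop :=
  (∀ p ∈ S, q.ballLE p b) ∧ ∀ c, (∀ p ∈ S, q.ballLE p c) → q.ballLE b c

/-- `le` is a directed preorder (reflexive, transitive, directed). -/
def DirectedPre {D : Type v} (le : D → D → Prop) : Prop :=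
  (∀ i, le i i) ∧ (∀ i j k, le i j → le j k → le i k) ∧ ∀ i j, ∃ k, le i k ∧ le j k

/-- A net `x : D → X` is forward Cauchy: `inf_i sup_{k ≥ j ≥ i} d (x j) (x k) = 0`. -/
def ForwardCauchy (q : QuasiMetric X) {D : Type v} (le : D → D → Prop) (x : D → X) : Prop :=
  (⨅ i, ⨆ j, ⨆ (_ : le i j), ⨆ k, ⨆ (_ : le j k), q.d (x j) (x k)) = 0

/-- `a` is a Yoneda limit of the net `x : D → X`:
for all `y`, `d a y = inf_i sup_{j ≥ i} d (x j) y`. -/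
def IsYonedaLimit (q : QuasiMetric X) {D : Type v} (le : D → D → Prop) (x : D → X) (a : X) :
    Prop :=
  ∀ y, q.d a y = ⨅ i, ⨆ j, ⨆ (_ : le i j), q.d (x j) y

/-- `(X, d)` is Yoneda complete: every forward Cauchy net has a Yoneda limit. -/
def YonedaComplete (q : QuasiMetric X) : Prop :=
  ∀ (D : Type u) (le : D → D → Prop), DirectedPre le → Nonempty D →
    ∀ x : D → X, q.ForwardCauchy le x → ∃ a, q.IsYonedaLimit le x a

/-- `(X, d)` is standard: whenever a directed set of formal balls (viewed as a monotone
net indexed by itself) has a least upper bound, the corresponding forward Cauchy net of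
centers has a Yoneda limit. -/
def Standard (q : QuasiMetric X) : Prop :=
  ∀ S : Set (X × ℝ≥0), S.Nonempty → DirectedOn q.ballLE S →
    (∃ b, q.IsBallLUB S b) →
    ∃ a, q.IsYonedaLimit (fun p p' : ↥S => q.ballLE p.1 p'.1) (fun p : ↥S => p.1.1) a

/-- A weight of `(X, d)`: `φ x ≤ φ y + d x y`. -/
def IsWeight (q : QuasiMetric X) (φ : X → ℝ≥0∞) : Prop :=
  ∀ x y, φ x ≤ φ y + q.d x y

/-- The quasi-metric on weights: `ρ(φ, ψ) = sup_y (ψ y ⊖ φ y)`. -/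
noncomputable def rho {Y : Type v} (φ ψ : Y → ℝ≥0∞) : ℝ≥0∞ := ⨆ y, ψ y - φ y

/-- An ideal of `(X, d)`: a weight `φ` with `inf φ = 0` such that
`ρ(φ, min (λ, μ)) = min (ρ(φ,λ), ρ(φ,μ))` for all weights `λ`, `μ`. -/
def IsIdeal (q : QuasiMetric X) (φ : X → ℝ≥0∞) : Prop :=
  q.IsWeight φ ∧ (⨅ x, φ x) = 0 ∧
    ∀ l m : X → ℝ≥0∞, q.IsWeight l → q.IsWeight m →
      rho φ (fun x => min (l x) (m x)) = min (rho φ l) (rho φ m)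

/-- A weight `φ` is bounded: there are `r < ∞` and `a ∈ X` with `d x a ≤ r + φ x` for all `x`. -/
def BoundedWeight (q : QuasiMetric X) (φ : X → ℝ≥0∞) : Prop :=
  ∃ (r : ℝ≥0) (a : X), ∀ x, q.d x a ≤ (r : ℝ≥0∞) + φ x

/-- `b` is a colimit of the weight `φ`: for all `y`, `d b y = sup_x (d x y ⊖ φ x)`. -/
def IsColimit (q : QuasiMetric X) (φ : X → ℝ≥0∞) (b : X) : Prop :=
  ∀ y, q.d b y = ⨆ x, q.d x y - φ x

/-- The poset of formal balls is a dcpo: every (nonempty) directed subset has a lub. -/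
def BallDcpo (q : QuasiMetric X) : Prop :=
  ∀ S : Set (X × ℝ≥0), S.Nonempty → DirectedOn q.ballLE S → ∃ b, q.IsBallLUB S b

/-- The poset of formal balls is a local dcpo: every (nonempty) directed subset with an
upper bound has a lub. -/
def BallLocalDcpo (q : QuasiMetric X) : Prop :=
  ∀ S : Set (X × ℝ≥0), S.Nonempty → DirectedOn q.ballLE S →
    (∃ c, ∀ p ∈ S, q.ballLE p c) → ∃ b, q.IsBallLUB S b

/-- `u` is way below `v` in the poset of formal balls. -/
def ballWayBelow (q : QuasiMetric X) (u v : X × ℝ≥0) : Prop :=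
  ∀ S : Set (X × ℝ≥0), S.Nonempty → DirectedOn q.ballLE S →
    ∀ s, q.IsBallLUB S s → q.ballLE v s → ∃ p ∈ S, q.ballLE u p

/-- The poset of formal balls is a continuous poset: for every `p`, the set of elements
way below `p` is (nonempty) directed and has `p` as its least upper bound. -/
def BallContinuousPoset (q : QuasiMetric X) : Prop :=
  ∀ p : X × ℝ≥0,
    {u : X × ℝ≥0 | q.ballWayBelow u p}.Nonempty ∧
    DirectedOn q.ballLE {u : X × ℝ≥0 | q.ballWayBelow u p} ∧
    q.IsBallLUB {u : X × ℝ≥0 | q.ballWayBelow u p} p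

/-- A function `χ` is `𝓙`-closed: `ρ(ψ, χ) ≥ χ (colim ψ)` for every bounded ideal `ψ`
possessing a colimit. -/
def JClosed (q : QuasiMetric X) (χ : X → ℝ≥0∞) : Prop :=
  ∀ ψ : X → ℝ≥0∞, q.IsIdeal ψ → q.BoundedWeight ψ → ∀ c, q.IsColimit ψ c → χ c ≤ rho ψ χ

/-- `(X, d)` is a continuous `𝕁`-algebra: every bounded ideal has a colimit, and there is
a map `⇓` assigning to each `x` a bounded ideal `⇓x` with `ρ(⇓x, φ) = d x (colim φ)` for
all `x` and all bounded ideals `φ`. -/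
def ContinuousJAlgebra (q : QuasiMetric X) : Prop :=
  ∃ colim : (X → ℝ≥0∞) → X,
    (∀ φ, q.IsIdeal φ → q.BoundedWeight φ → q.IsColimit φ (colim φ)) ∧
    ∃ w : X → X → ℝ≥0∞,
      (∀ x, q.IsIdeal (w x) ∧ q.BoundedWeight (w x)) ∧
      ∀ (x : X) (φ : X → ℝ≥0∞), q.IsIdeal φ → q.BoundedWeight φ →
        rho (w x) φ = q.d x (colim φ)

/-- The quasi-metric space of all functions `X → [0,∞]` satisfying a predicate `P`
(e.g. the bounded weights, or the bounded ideals), with the quasi-metric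
`ρ(φ, ψ) = sup_x (ψ x ⊖ φ x)`. -/
noncomputable def weightSpace (q : QuasiMetric X) (P : (X → ℝ≥0∞) → Prop) :
    QuasiMetric {φ : X → ℝ≥0∞ // P φ} where
  d φ ψ := rho φ.1 ψ.1
  d_self φ := by simp [rho]
  d_triangle φ ψ χ := by
    refine iSup_le fun x => ?_
    calc χ.1 x - φ.1 x ≤ (χ.1 x - ψ.1 x) + (ψ.1 x - φ.1 x) := tsub_le_tsub_add_tsub
    _ ≤ rho ψ.1 χ.1 + rho φ.1 ψ.1 :=
        add_le_add (le_iSup (fun y => χ.1 y - ψ.1 y) x) (le_iSup (fun y => ψ.1 y - φ.1 y) x)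
    _ = rho φ.1 ψ.1 + rho ψ.1 χ.1 := add_comm _ _
  d_separated φ ψ h1 h2 := by
    apply Subtype.ext
    funext x
    have hx1 : ψ.1 x - φ.1 x ≤ 0 := by
      rw [← h1]; exact le_iSup (fun y => ψ.1 y - φ.1 y) x
    have hx2 : φ.1 x - ψ.1 x ≤ 0 := by
      rw [← h2]; exact le_iSup (fun y => φ.1 y - ψ.1 y) x
    exact le_antisymm (tsub_eq_zero_iff_le.mp (le_antisymm hx2 (by simp)))
      (tsub_eq_zero_iff_le.mp (le_antisymm hx1 (by simp)))

end QuasiMetric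

namespace QuasiMetric

variable {X : Type u}

private lemma cauchy_bound (q : QuasiMetric X) {D : Type v} {le : D → D → Prop} {x : D → X}
    (h : q.ForwardCauchy le x) {ε : ℝ≥0∞} (hε : 0 < ε) :
    ∃ i, ∀ j k, le i j → le j k → q.d (x j) (x k) ≤ ε := by
  have h2 : (⨅ i, ⨆ j, ⨆ (_ : le i j), ⨆ k, ⨆ (_ : le j k), q.d (x j) (x k)) < ε := by
    rw [h]; exact hε
  obtain ⟨i, hi⟩ := iInf_lt_iff.mp h2
  refine ⟨i, fun j k hij hjk => le_of_lt (lt_of_le_of_lt ?_ hi)⟩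
  exact le_iSup_of_le j (le_iSup_of_le hij (le_iSup_of_le k (le_iSup_of_le hjk le_rfl)))

private lemma stmt15_forward (q : QuasiMetric X)
    (H : ∀ φ : X → ℝ≥0∞, q.IsIdeal φ → q.BoundedWeight φ → ∃ b, q.IsColimit φ b)
    (D : Type v) (le : D → D → Prop) (hD : DirectedPre le) (hne : Nonempty D)
    (x : D → X) (hC : q.ForwardCauchy le x)
    (hB : ∃ (a : X) (r : ℝ≥0), ∀ (z : X) (i : D), ∃ j, le i j ∧
      q.d z a ≤ (r : ℝ≥0∞) + q.d z (x j)) :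
    ∃ a, q.IsYonedaLimit le x a := by
  obtain ⟨hrefl, htrans, hdir⟩ := hD
  set φ : X → ℝ≥0∞ := fun y => ⨅ i, ⨆ j, ⨆ (_ : le i j), q.d y (x j) with hφdef
  have hφle : ∀ (y : X) (i : D), φ y ≤ ⨆ j, ⨆ (_ : le i j), q.d y (x j) := by
    intro y i
    rw [hφdef]
    exact iInf_le _ i
  have hφd : ∀ (y : X) (i : D) (j : D), le i j →
      q.d y (x j) ≤ ⨆ j', ⨆ (_ : le i j'), q.d y (x j') := by
    intro y i j hj
    exact le_iSup₂ (f := fun j' (_ : le i j') => q.d y (x j')) j hj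
  -- φ is a weight
  have hweight : q.IsWeight φ := by
    intro z w
    have : φ w + q.d z w = ⨅ i, ((⨆ j, ⨆ (_ : le i j), q.d w (x j)) + q.d z w) := by
      rw [hφdef]; exact ENNReal.iInf_add
    rw [this]
    refine le_iInf fun i => le_trans (hφle z i) ?_
    refine iSup₂_le fun j hj => ?_
    calc q.d z (x j) ≤ q.d z w + q.d w (x j) := q.d_triangle z w (x j)
    _ ≤ q.d z w + ⨆ j', ⨆ (_ : le i j'), q.d w (x j') := add_le_add_right (hφd w i j hj) _
    _ = (⨆ j', ⨆ (_ : le i j'), q.d w (x j')) + q.d z w := add_comm _ _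
  -- φ is small on tails
  have htail : ∀ (ε : ℝ≥0∞), 0 < ε → ∃ i, ∀ j, le i j → φ (x j) ≤ ε := by
    intro ε hε
    obtain ⟨i, hi⟩ := q.cauchy_bound hC hε
    exact ⟨i, fun j hj => le_trans (hφle (x j) j) (iSup₂_le fun k hk => hi j k hj hk)⟩
  have hinf : (⨅ y, φ y) = 0 := by
    refine le_antisymm (ENNReal.le_of_forall_pos_le_add fun ε hε _ => ?_) (zero_le)
    obtain ⟨i, hi⟩ := htail ε (ENNReal.coe_pos.mpr hε)
    calc (⨅ y, φ y) ≤ φ (x i) := iInf_le _ _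
    _ ≤ ε := hi i (hrefl i)
    _ ≤ 0 + ε := by rw [zero_add]
  -- flatness
  have hflat : ∀ l m : X → ℝ≥0∞, q.IsWeight l → q.IsWeight m →
      rho φ (fun y => min (l y) (m y)) = min (rho φ l) (rho φ m) := by
    intro l m hl hm
    refine le_antisymm (le_min (iSup_mono fun w => tsub_le_tsub_right (min_le_left _ _) _)
      (iSup_mono fun w => tsub_le_tsub_right (min_le_right _ _) _)) ?_
    by_contra hcon
    push_neg at hcon
    set R := rho φ (fun y => min (l y) (m y)) with hR
    obtain ⟨c', hRc', hc'⟩ := exists_between hcon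
    have hc'top : c' ≠ ∞ := ne_top_of_lt hc'
    have hRtop : R ≠ ∞ := ne_top_of_lt hRc'
    set η : ℝ≥0∞ := c' - R with hηdef
    have hη0 : η ≠ 0 := (tsub_pos_of_lt hRc').ne'
    have hηtop : η ≠ ∞ := ne_top_of_le_ne_top hc'top tsub_le_self
    set δ : ℝ≥0∞ := η / 2 / 2 with hδdef
    have hδ0 : δ ≠ 0 := by
      rw [hδdef]
      exact (ENNReal.div_pos (ENNReal.div_pos hη0 (by norm_num)).ne'
        (by norm_num)).ne'
    have hδpos : 0 < δ := pos_iff_ne_zero.mpr hδ0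
    -- extract u from l, v from m
    obtain ⟨u, hu⟩ := lt_iSup_iff.mp (lt_of_lt_of_le hc' (min_le_left _ _))
    obtain ⟨v, hv⟩ := lt_iSup_iff.mp (lt_of_lt_of_le hc' (min_le_right _ _))
    have hu' : c' + φ u < l u := lt_tsub_iff_right.mp hu
    have hv' : c' + φ v < m v := lt_tsub_iff_right.mp hv
    have hφu : φ u ≠ ∞ := by intro h; simp [h, ENNReal.sub_top] at hu
    have hφv : φ v ≠ ∞ := by intro h; simp [h, ENNReal.sub_top] at hv
    have hu2 : φ u < φ u + δ := ENNReal.lt_add_right hφu hδ0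
    have hv2 : φ v < φ v + δ := ENNReal.lt_add_right hφv hδ0
    rw [hφdef] at hu2 hv2
    obtain ⟨iu, hiu⟩ := iInf_lt_iff.mp hu2
    obtain ⟨iv, hiv⟩ := iInf_lt_iff.mp hv2
    obtain ⟨ic, hic⟩ := htail δ hδpos
    obtain ⟨i1, h1, h2⟩ := hdir iu iv
    obtain ⟨i, h3, h4⟩ := hdir i1 ic
    have hju : le iu i := htrans _ _ _ h1 h3
    have hjv : le iv i := htrans _ _ _ h2 h3
    have hdu : q.d u (x i) ≤ φ u + δ := le_of_lt (lt_of_le_of_lt (hφd u iu i hju) hiu)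
    have hdv : q.d v (x i) ≤ φ v + δ := le_of_lt (lt_of_le_of_lt (hφd v iv i hjv) hiv)
    have hli : c' - δ ≤ l (x i) := by
      calc c' - δ = (c' + φ u) - (φ u + δ) := by
            rw [← tsub_tsub, ENNReal.add_sub_cancel_right hφu]
      _ ≤ l u - (φ u + δ) := tsub_le_tsub_right (le_of_lt hu') _
      _ ≤ l u - q.d u (x i) := tsub_le_tsub_left hdu _
      _ ≤ l (x i) := tsub_le_iff_right.mpr (hl u (x i))
    have hmi : c' - δ ≤ m (x i) := by
      calc c' - δ = (c' + φ v) - (φ v + δ) := by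
            rw [← tsub_tsub, ENNReal.add_sub_cancel_right hφv]
      _ ≤ m v - (φ v + δ) := tsub_le_tsub_right (le_of_lt hv') _
      _ ≤ m v - q.d v (x i) := tsub_le_tsub_left hdv _
      _ ≤ m (x i) := tsub_le_iff_right.mpr (hm v (x i))
    have hfin : c' - η / 2 ≤ R := by
      refine le_iSup_of_le (x i) ?_
      calc c' - η / 2 = (c' - δ) - δ := by rw [tsub_tsub, hδdef, ENNReal.add_halves]
      _ ≤ min (l (x i)) (m (x i)) - φ (x i) := tsub_le_tsub (le_min hli hmi) (hic i h4)
    have hlt : R < c' - η / 2 := by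
      rw [lt_tsub_iff_right]
      calc R + η / 2 < R + η := ENNReal.add_lt_add_left hRtop
            (ENNReal.half_lt_self hη0 hηtop)
      _ = c' := add_tsub_cancel_of_le (le_of_lt hRc')
    exact absurd hfin (not_le.mpr hlt)
  -- φ is bounded
  have hbounded : q.BoundedWeight φ := by
    obtain ⟨a, r, ha⟩ := hB
    refine ⟨r, a, fun w => ?_⟩
    have : (r : ℝ≥0∞) + φ w = ⨅ i, ((r : ℝ≥0∞) + ⨆ j, ⨆ (_ : le i j), q.d w (x j)) := by
      rw [hφdef]; exact ENNReal.add_iInf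
    rw [this]
    refine le_iInf fun i => ?_
    obtain ⟨j, hij, hj⟩ := ha w i
    exact hj.trans (add_le_add_right (hφd w i j hij) _)
  obtain ⟨b, hb⟩ := H φ ⟨hweight, hinf, hflat⟩ hbounded
  refine ⟨b, fun y => ?_⟩
  rw [hb y]
  apply le_antisymm
  · -- sup_w (d w y - φ w) ≤ inf_i sup_{j≥i} d (x j) y
    refine iSup_le fun w => le_iInf fun i => ?_
    rw [tsub_le_iff_right]
    refine ENNReal.le_of_forall_pos_le_add fun ε hε hfin => ?_
    have hφw : φ w ≠ ∞ := by
      intro h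
      rw [h] at hfin
      simp at hfin
    have hw2 : φ w < φ w + ε := ENNReal.lt_add_right hφw (ENNReal.coe_pos.mpr hε).ne'
    rw [hφdef] at hw2
    obtain ⟨i', hi'⟩ := iInf_lt_iff.mp hw2
    obtain ⟨j, hij, hi'j⟩ := hdir i i'
    calc q.d w y ≤ q.d w (x j) + q.d (x j) y := q.d_triangle w (x j) y
    _ ≤ (φ w + ε) + q.d (x j) y := add_le_add_left
        (le_of_lt (lt_of_le_of_lt (hφd w i' j hi'j) hi')) _
    _ ≤ (φ w + ε) + ⨆ j', ⨆ (_ : le i j'), q.d (x j') y :=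
        add_le_add_right (le_iSup₂ (f := fun j' (_ : le i j') => q.d (x j') y) j hij) _
    _ = (⨆ j', ⨆ (_ : le i j'), q.d (x j') y) + φ w + ε := by ring
  · -- inf_i sup_{j≥i} d (x j) y ≤ sup_w (d w y - φ w)
    refine ENNReal.le_of_forall_pos_le_add fun ε hε hfin => ?_
    obtain ⟨i, hi⟩ := htail ε (ENNReal.coe_pos.mpr hε)
    refine le_trans (iInf_le _ i) (iSup₂_le fun j hj => ?_)
    calc q.d (x j) y ≤ (q.d (x j) y - φ (x j)) + φ (x j) := le_tsub_add
    _ ≤ (⨆ w, q.d w y - φ w) + ε := add_le_add (le_iSup_of_le (x j) le_rfl) (hi j hj)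

end QuasiMetric

namespace QuasiMetric

variable {X : Type u}

private lemma stmt15_backward (q : QuasiMetric X)
    (H : ∀ (D : Type u) (le : D → D → Prop), DirectedPre le → Nonempty D →
      ∀ x : D → X, q.ForwardCauchy le x →
        (∃ (a : X) (r : ℝ≥0), ∀ (z : X) (i : D), ∃ j, le i j ∧
          q.d z a ≤ (r : ℝ≥0∞) + q.d z (x j)) →
        ∃ a, q.IsYonedaLimit le x a)
    (φ : X → ℝ≥0∞) (hφ : q.IsIdeal φ) (hbw : q.BoundedWeight φ) :
    ∃ b, q.IsColimit φ b := by
  obtain ⟨hw, hinf, hflat⟩ := hφ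
  set S : Set (X × ℝ≥0) := {p | φ p.1 < (p.2 : ℝ≥0∞)} with hSdef
  have hmemS : ∀ p : X × ℝ≥0, p ∈ S ↔ φ p.1 < (p.2 : ℝ≥0∞) := fun p => Iff.rfl
  -- directedness of S
  have hdirS : ∀ p ∈ S, ∀ p' ∈ S, ∃ z ∈ S, q.ballLE p z ∧ q.ballLE p' z := by
    rintro ⟨x, r⟩ hp ⟨y, s⟩ hp'
    rw [hmemS] at hp hp'
    set l : X → ℝ≥0∞ := fun w => (r : ℝ≥0∞) - q.d x w with hldef
    set m : X → ℝ≥0∞ := fun w => (s : ℝ≥0∞) - q.d y w with hmdef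
    have hwl : q.IsWeight l := by
      intro w w'
      calc (r : ℝ≥0∞) - q.d x w
          ≤ ((r : ℝ≥0∞) - q.d x w') + (q.d x w' - q.d x w) := tsub_le_tsub_add_tsub
      _ ≤ ((r : ℝ≥0∞) - q.d x w') + q.d w w' :=
          add_le_add_right (tsub_le_iff_left.mpr (q.d_triangle x w w')) _
    have hwm : q.IsWeight m := by
      intro w w'
      calc (s : ℝ≥0∞) - q.d y w
          ≤ ((s : ℝ≥0∞) - q.d y w') + (q.d y w' - q.d y w) := tsub_le_tsub_add_tsub
      _ ≤ ((s : ℝ≥0∞) - q.d y w') + q.d w w' :=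
          add_le_add_right (tsub_le_iff_left.mpr (q.d_triangle y w w')) _
    set μ : ℝ≥0∞ := min ((r : ℝ≥0∞) - φ x) ((s : ℝ≥0∞) - φ y) with hμdef
    have hμ0 : μ ≠ 0 := (lt_min (tsub_pos_of_lt hp) (tsub_pos_of_lt hp')).ne'
    have hμtop : μ ≠ ∞ :=
      ne_top_of_le_ne_top ENNReal.coe_ne_top ((min_le_left _ _).trans tsub_le_self)
    have h1 : μ ≤ rho φ (fun w => min (l w) (m w)) := by
      rw [hflat l m hwl hwm]
      refine le_min (le_iSup_of_le x ?_) (le_iSup_of_le y ?_)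
      · rw [hldef]
        simp only [q.d_self, tsub_zero]
        rw [hμdef]
        exact min_le_left _ _
      · rw [hmdef]
        simp only [q.d_self, tsub_zero]
        rw [hμdef]
        exact min_le_right _ _
    have h2 : μ / 2 < rho φ (fun w => min (l w) (m w)) :=
      lt_of_lt_of_le (ENNReal.half_lt_self hμ0 hμtop) h1
    obtain ⟨z, hz⟩ := lt_iSup_iff.mp h2
    have hzl : μ / 2 + φ z < (r : ℝ≥0∞) - q.d x z := by
      have := lt_tsub_iff_right.mp (hz.trans_le (tsub_le_tsub_right (min_le_left _ _) _))
      simpa [hldef] using this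
    have hzm : μ / 2 + φ z < (s : ℝ≥0∞) - q.d y z := by
      have := lt_tsub_iff_right.mp (hz.trans_le (tsub_le_tsub_right (min_le_right _ _) _))
      simpa [hmdef] using this
    have hzl' : (μ / 2 + φ z) + q.d x z < (r : ℝ≥0∞) := lt_tsub_iff_right.mp hzl
    have hzm' : (μ / 2 + φ z) + q.d y z < (s : ℝ≥0∞) := lt_tsub_iff_right.mp hzm
    have hφz : φ z ≠ ∞ := by
      intro h
      rw [h] at hzl'
      simp at hzl'
    have h2ne : μ / 2 ≠ ∞ := ne_top_of_le_ne_top hμtop ENNReal.half_le_self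
    have h20 : μ / 2 ≠ 0 := (ENNReal.half_pos hμ0).ne'
    set t : ℝ≥0 := (φ z + μ / 2).toNNReal with htdef
    have ht : (t : ℝ≥0∞) = φ z + μ / 2 :=
      ENNReal.coe_toNNReal (ENNReal.add_ne_top.mpr ⟨hφz, h2ne⟩)
    refine ⟨(z, t), ?_, ?_, ?_⟩
    · rw [hmemS]
      rw [ht]
      exact ENNReal.lt_add_right hφz h20
    · show (t : ℝ≥0∞) + q.d x z ≤ (r : ℝ≥0∞)
      rw [ht, add_comm (φ z) (μ / 2)]
      exact le_of_lt hzl'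
    · show (t : ℝ≥0∞) + q.d y z ≤ (s : ℝ≥0∞)
      rw [ht, add_comm (φ z) (μ / 2)]
      exact le_of_lt hzm'
  -- small balls
  have hsmall : ∀ ε : ℝ≥0, 0 < ε → ∃ x₂, ((x₂, ε) : X × ℝ≥0) ∈ S := by
    intro ε hε
    have : (⨅ y, φ y) < (ε : ℝ≥0∞) := by rw [hinf]; exact ENNReal.coe_pos.mpr hε
    obtain ⟨x₂, hx₂⟩ := iInf_lt_iff.mp this
    exact ⟨x₂, (hmemS _).mpr hx₂⟩
  obtain ⟨x₁, hp₁⟩ := hsmall 1 one_pos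
  -- the directed preorder on S
  set le : ↥S → ↥S → Prop := fun p p' => q.ballLE p.1 p'.1 with hledef
  have hD : DirectedPre le := by
    refine ⟨fun p => ?_, fun a b c hab hbc => ?_, fun a b => ?_⟩
    · show (p.1.2 : ℝ≥0∞) + q.d p.1.1 p.1.1 ≤ p.1.2
      rw [q.d_self, add_zero]
    · show (c.1.2 : ℝ≥0∞) + q.d a.1.1 c.1.1 ≤ a.1.2
      calc (c.1.2 : ℝ≥0∞) + q.d a.1.1 c.1.1
          ≤ (c.1.2 : ℝ≥0∞) + (q.d a.1.1 b.1.1 + q.d b.1.1 c.1.1) :=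
            add_le_add_right (q.d_triangle _ _ _) _
      _ = ((c.1.2 : ℝ≥0∞) + q.d b.1.1 c.1.1) + q.d a.1.1 b.1.1 := by ring
      _ ≤ (b.1.2 : ℝ≥0∞) + q.d a.1.1 b.1.1 := add_le_add_left hbc _
      _ ≤ a.1.2 := hab
    · obtain ⟨z, hzS, hz1, hz2⟩ := hdirS a.1 a.2 b.1 b.2
      exact ⟨⟨z, hzS⟩, hz1, hz2⟩
  -- the net of centers
  set net : ↥S → X := fun p => p.1.1 with hnetdef
  have hradle : ∀ (i j : ↥S), le i j → (j.1.2 : ℝ≥0∞) ≤ i.1.2 :=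
    fun i j hij => le_trans le_self_add hij
  have hdle : ∀ (i j : ↥S), le i j → q.d i.1.1 j.1.1 ≤ i.1.2 :=
    fun i j hij => le_trans le_add_self hij
  have hC : q.ForwardCauchy le net := by
    refine le_antisymm (ENNReal.le_of_forall_pos_le_add fun ε hε _ => ?_) (zero_le)
    obtain ⟨x₂, hx₂⟩ := hsmall ε hε
    refine le_trans (iInf_le _ ⟨(x₂, ε), hx₂⟩) ?_
    rw [zero_add]
    refine iSup₂_le fun j hj => iSup₂_le fun k hk => ?_
    exact le_trans (hdle j k hk) (hradle _ j hj)
  have hBnet : ∃ (a : X) (r : ℝ≥0), ∀ (z : X) (i : ↥S), ∃ j, le i j ∧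
      q.d z a ≤ (r : ℝ≥0∞) + q.d z (net j) := by
    obtain ⟨r₀, a, ha⟩ := hbw
    refine ⟨a, r₀ + 1, fun z i => ?_⟩
    obtain ⟨k, hkS, hik, h1k⟩ := hdirS i.1 i.2 (x₁, 1) hp₁
    refine ⟨⟨k, hkS⟩, hik, ?_⟩
    have hφk : φ k.1 ≤ 1 := by
      refine le_trans (le_of_lt ((hmemS k).mp hkS)) ?_
      have : (k.2 : ℝ≥0∞) ≤ ((1 : ℝ≥0) : ℝ≥0∞) := le_trans le_self_add h1k
      simpa using this
    calc q.d z a ≤ q.d z k.1 + q.d k.1 a := q.d_triangle _ _ _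
    _ ≤ q.d z k.1 + ((r₀ : ℝ≥0∞) + φ k.1) := add_le_add_right (ha k.1) _
    _ ≤ q.d z k.1 + ((r₀ : ℝ≥0∞) + 1) := add_le_add_right (add_le_add_right hφk _) _
    _ = ((r₀ + 1 : ℝ≥0) : ℝ≥0∞) + q.d z k.1 := by
        push_cast
        ring
  obtain ⟨a, ha⟩ := H (↥S) le hD ⟨⟨(x₁, 1), hp₁⟩⟩ net hC hBnet
  refine ⟨a, fun y => ?_⟩
  rw [ha y]
  apply le_antisymm
  · -- inf over balls ≤ sup_w (d w y - φ w)
    refine ENNReal.le_of_forall_pos_le_add fun ε hε _ => ?_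
    obtain ⟨x₂, hx₂⟩ := hsmall ε hε
    refine le_trans (iInf_le _ ⟨(x₂, ε), hx₂⟩) (iSup₂_le fun j hj => ?_)
    have hφj : φ (net j) ≤ (ε : ℝ≥0∞) :=
      le_trans (le_of_lt ((hmemS j.1).mp j.2)) (hradle ⟨(x₂, ε), hx₂⟩ j hj)
    calc q.d (net j) y ≤ (q.d (net j) y - φ (net j)) + φ (net j) := le_tsub_add
    _ ≤ (⨆ w, q.d w y - φ w) + ε := add_le_add (le_iSup_of_le (net j) le_rfl) hφj
  · -- sup_w (d w y - φ w) ≤ inf over balls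
    refine iSup_le fun w => le_iInf fun i => ?_
    rw [tsub_le_iff_right]
    refine ENNReal.le_of_forall_pos_le_add fun ε hε hfin => ?_
    have hφw : φ w ≠ ∞ := by
      intro h
      simp [h] at hfin
    have hsw : (((φ w).toNNReal + ε : ℝ≥0) : ℝ≥0∞) = φ w + ε := by
      push_cast
      rw [ENNReal.coe_toNNReal hφw]
    have hmemw : ((w, (φ w).toNNReal + ε) : X × ℝ≥0) ∈ S := by
      rw [hmemS, hsw]
      exact ENNReal.lt_add_right hφw (ENNReal.coe_pos.mpr hε).ne'
    obtain ⟨k, hkS, hik, hwk⟩ := hdirS i.1 i.2 (w, (φ w).toNNReal + ε) hmemw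
    have hdwk : q.d w k.1 ≤ φ w + ε := by
      rw [← hsw]
      exact le_trans le_add_self hwk
    have hky : q.d k.1 y ≤ ⨆ j, ⨆ (_ : le i j), q.d (net j) y :=
      le_iSup₂ (f := fun (j : ↥S) (_ : le i j) => q.d (net j) y) ⟨k, hkS⟩ hik
    calc q.d w y ≤ q.d w k.1 + q.d k.1 y := q.d_triangle _ _ _
    _ ≤ (φ w + ε) + q.d k.1 y := add_le_add_left hdwk _
    _ ≤ (φ w + ε) + ⨆ j, ⨆ (_ : le i j), q.d (net j) y := add_le_add_right hky _
    _ = (⨆ j, ⨆ (_ : le i j), q.d (net j) y) + φ w + ε := by ring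
end QuasiMetric

open QuasiMetric in
/-- every bounded ideal of `(X, d)` has a colimit iff every bounded forward
Cauchy net of `(X, d)` has a Yoneda limit. -/
theorem stmt15 {X : Type u} (q : QuasiMetric X) :
    (∀ φ : X → ℝ≥0∞, q.IsIdeal φ → q.BoundedWeight φ → ∃ b, q.IsColimit φ b) ↔
      (∀ (D : Type u) (le : D → D → Prop), DirectedPre le → Nonempty D →
        ∀ x : D → X, q.ForwardCauchy le x →
          (∃ (a : X) (r : ℝ≥0), ∀ (z : X) (i : D), ∃ j, le i j ∧
            q.d z a ≤ (r : ℝ≥0∞) + q.d z (x j)) →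
          ∃ a, q.IsYonedaLimit le x a) :=
  ⟨fun H D le hD hne x hC hB => q.stmt15_forward H D le hD hne x hC hB,
   fun H φ hφ hbw => q.stmt15_backward H φ hφ hbw⟩
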